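/- arXiv:0812.0179 — 3 statements merged into one kernel-verified Lean document; each statement's English description precedes it below -/
import Mathlib

section
/- Let p be a prime and r a positive integer. If k, k', i, j are nonnegative integers with k ≡ k' (mod p^{2r}), 0 ≤ i ≤ r and 0 ≤ j ≤ r - i, then the binomial coefficients satisfy C(k - i, j) ≡ C(k' - i, j) (mod p^r), provided k, k' ≥ r. -/
/-- Let `p` be a prime and `r` a positive integer. If `k, k', i, j` are nonnegative integers
with `k ≡ k' (mod p^(2r))`, `0 ≤ i ≤ r` and `0 ≤ j ≤ r - i`, then `C(k-i, j) ≡ C(k'-i, j)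
(mod p^r)`, provided `k, k' ≥ r`. -/
theorem stmt_1 (p r k k' i j : ℕ) (hp : p.Prime) (hr : 0 < r)
    (hk : r ≤ k) (hk' : r ≤ k') (hkk' : k ≡ k' [MOD p ^ (2 * r)])
    (hi : i ≤ r) (hj : j ≤ r - i) :
    Nat.choose (k - i) j ≡ Nat.choose (k' - i) j [MOD p ^ r] := by
  haveI : Fact p.Prime := ⟨hp⟩
  set a := k - i with ha
  set b := k' - i with hb
  have hik : i ≤ k := hi.trans hk
  have hik' : i ≤ k' := hi.trans hk'
  have hja : j ≤ a := le_trans hj (Nat.sub_le_sub_right hk i)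
  have hjb : j ≤ b := le_trans hj (Nat.sub_le_sub_right hk' i)
  -- valuation bound for j!
  have hs : padicValNat p (Nat.factorial j) ≤ r := by
    have h1 : (p - 1) * padicValNat p (Nat.factorial j) =
        j - (p.digits j).sum := sub_one_mul_padicValNat_factorial j
    have hp2 : 2 ≤ p := hp.two_le
    have : padicValNat p (Nat.factorial j) ≤ (p - 1) * padicValNat p (Nat.factorial j) :=
      Nat.le_mul_of_pos_left _ (by omega)
    have hjr : j ≤ r := hj.trans (Nat.sub_le r i)
    omega
  set s := padicValNat p (Nat.factorial j) with hsdef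
  set m := Nat.factorial j / p ^ s with hm
  have hfac : p ^ s * m = Nat.factorial j := by
    rw [hm, hsdef, ← Nat.factorization_def _ hp]
    exact Nat.ordProj_mul_ordCompl_eq_self _ p
  have hpm : ¬ p ∣ m := by
    rw [hm, hsdef, ← Nat.factorization_def _ hp]
    exact Nat.not_dvd_ordCompl hp (Nat.factorial_ne_zero j)
  -- key divisibility in ℤ
  have hcast : ∀ n : ℕ, j ≤ n → (Nat.factorial j : ℤ) * (n.choose j : ℤ) =
      ∏ t ∈ Finset.range j, ((n : ℤ) - t) := by
    intro n hn
    have h1 : Nat.factorial j * n.choose j = n.descFactorial j := by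
      rw [Nat.descFactorial_eq_factorial_mul_choose]
    have h2 : (n.descFactorial j : ℤ) = ∏ t ∈ Finset.range j, ((n : ℤ) - t) := by
      rw [Nat.descFactorial_eq_prod_range]
      push_cast
      refine Finset.prod_congr rfl fun t ht => ?_
      rw [Nat.cast_sub (le_of_lt (lt_of_lt_of_le (Finset.mem_range.mp ht) hn))]
    rw [← h2, ← h1]; push_cast; ring
  have hab : (a : ℤ) ≡ (b : ℤ) [ZMOD (p ^ (2 * r) : ℕ)] := by
    have h0 : (k : ℤ) ≡ (k' : ℤ) [ZMOD (p ^ (2 * r) : ℕ)] := Int.natCast_modEq_iff.mpr hkk'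
    have h1 := h0.sub_right (i : ℤ)
    rw [ha, hb]
    simpa [Int.natCast_sub hik, Int.natCast_sub hik'] using h1
  have hprodcong : (∏ t ∈ Finset.range j, ((a : ℤ) - t)) ≡
      (∏ t ∈ Finset.range j, ((b : ℤ) - t)) [ZMOD (p ^ (2 * r) : ℕ)] := by
    rw [← ZMod.intCast_eq_intCast_iff] at hab ⊢
    push_cast at hab ⊢
    exact Finset.prod_congr rfl fun t _ => by rw [hab]
  have hdvd : ((p : ℤ) ^ (2 * r)) ∣ (Nat.factorial j : ℤ) *
      ((a.choose j : ℤ) - (b.choose j : ℤ)) := by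
    rw [mul_sub, hcast a hja, hcast b hjb]
    have h := hprodcong.symm.dvd
    exact_mod_cast h
  -- cancel p^s and m
  have hps : (0:ℤ) < (p:ℤ) ^ s := by
    have : (0:ℤ) < (p:ℤ) := by exact_mod_cast hp.pos
    positivity
  have hdvd2 : ((p : ℤ) ^ (2 * r - s)) ∣ (m : ℤ) *
      ((a.choose j : ℤ) - (b.choose j : ℤ)) := by
    have h2 : (p : ℤ) ^ (2 * r) = (p:ℤ) ^ s * (p:ℤ) ^ (2 * r - s) := by
      rw [← pow_add]; congr 1; omega
    have : ((p:ℤ)^s * (p:ℤ)^(2*r-s)) ∣ (p:ℤ)^s * ((m : ℤ) *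
        ((a.choose j : ℤ) - (b.choose j : ℤ))) := by
      rw [← mul_assoc, ← h2]
      have : ((p:ℤ)^s * (m:ℤ)) = (Nat.factorial j : ℤ) := by exact_mod_cast congrArg Nat.cast hfac
      rw [this]; exact hdvd
    exact (mul_dvd_mul_iff_left hps.ne').mp this
  have hcop : IsCoprime ((p : ℤ) ^ (2 * r - s)) (m : ℤ) := by
    apply IsCoprime.pow_left
    rw [Int.isCoprime_iff_gcd_eq_one, Int.gcd_natCast_natCast]
    exact (Nat.Prime.coprime_iff_not_dvd hp).mpr hpm
  have hdvd3 : ((p : ℤ) ^ r) ∣ ((a.choose j : ℤ) - (b.choose j : ℤ)) := by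
    have h3 := hcop.dvd_of_dvd_mul_left hdvd2
    exact dvd_trans (pow_dvd_pow _ (by omega)) h3
  have : (a.choose j : ℤ) ≡ (b.choose j : ℤ) [ZMOD (p ^ r : ℕ)] := by
    rw [Int.modEq_iff_dvd]
    exact_mod_cast dvd_sub_comm.mp hdvd3
  exact Int.natCast_modEq_iff.mp this
end

section
/- Let O be a discrete valuation ring with maximal ideal (ϖ) and residue field of size q, let V be a free O-module of rank d, and let T : V → V be an O-linear endomorphism which, over the fraction field, is triangularizable with all eigenvalues μ of valuation v(μ) = c for a fixed nonnegative integer c. Then for any integer r > c, the cardinality of the kernel of T acting on V ⊗ O/(ϖ^r) divides q^{dc}; equivalently q^{d(r-c)} divides the cardinality of the cokernel (V ⊗ O/(ϖ^r)) / ker(T). -/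
open scoped BigOperators

section Aux

variable {O : Type*} [CommRing O] [IsDomain O]

private lemma aux_det_ne_zero_injective
    {V : Type*} [AddCommGroup V] [Module O V] [Module.Free O V] [Module.Finite O V]
    (T : V →ₗ[O] V) (h : LinearMap.det T ≠ 0) : Function.Injective T := by
  classical
  let b := Module.Free.chooseBasis O V
  have hker : ∀ x : V, T x = 0 → x = 0 := by
    intro x hx
    have h1 : (LinearMap.toMatrix b b T).mulVec (b.repr x) = 0 := by
      rw [LinearMap.toMatrix_mulVec_repr, hx]
      simp
    have h2 : (⇑(b.repr x) : _ → O) = 0 :=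
      Matrix.eq_zero_of_mulVec_eq_zero (by rwa [LinearMap.det_toMatrix]) h1
    have h3 : b.repr x = 0 := Finsupp.coe_eq_zero.mp h2
    simpa using b.repr.map_eq_zero_iff.mp h3
  intro x y hxy
  have : T (x - y) = 0 := by rw [map_sub, hxy, sub_self]
  exact sub_eq_zero.mp (hker _ this)

private lemma aux_card_quot_pow [IsDiscreteValuationRing O]
    (ϖ : O) (hϖ : Irreducible ϖ) (q : ℕ) (hq : Nat.card (O ⧸ Ideal.span {ϖ}) = q) (k : ℕ) :
    Nat.card (O ⧸ Ideal.span {ϖ ^ k}) = q ^ k := by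
  have hprime : Prime ϖ := (UniqueFactorizationMonoid.irreducible_iff_prime).mp hϖ
  haveI : (Ideal.span {ϖ}).IsPrime := (Ideal.span_singleton_prime hϖ.ne_zero).mpr hprime
  have hbot : Ideal.span {ϖ} ≠ ⊥ := by
    simp [Ne, Ideal.span_singleton_eq_bot, hϖ.ne_zero]
  calc Nat.card (O ⧸ Ideal.span {ϖ ^ k}) = Submodule.cardQuot (Ideal.span {ϖ} ^ k) := by
        rw [Ideal.span_singleton_pow, Submodule.cardQuot_apply]
    _ = Submodule.cardQuot (Ideal.span {ϖ}) ^ k := cardQuot_pow_of_prime hbot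
    _ = q ^ k := by rw [Submodule.cardQuot_apply, hq]

private lemma aux_card_quot_range [IsDiscreteValuationRing O]
    (ϖ : O) (hϖ : Irreducible ϖ) (q : ℕ) (hq : Nat.card (O ⧸ Ideal.span {ϖ}) = q)
    {V : Type*} [AddCommGroup V] [Module O V] [Module.Free O V] [Module.Finite O V]
    (T : V →ₗ[O] V) (k : ℕ) (hdet : Associated (LinearMap.det T) (ϖ ^ k)) :
    Nat.card (V ⧸ LinearMap.range T) = q ^ k := by
  classical
  have hϖk : (ϖ : O) ^ k ≠ 0 := pow_ne_zero k hϖ.ne_zero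
  have hdet0 : LinearMap.det T ≠ 0 := by
    intro h
    rw [h] at hdet
    exact hϖk ((associated_zero_iff_eq_zero _).mp hdet.symm)
  have hinj := aux_det_ne_zero_injective T hdet0
  let b := Module.Free.chooseBasis O V
  obtain ⟨n, snf⟩ := (LinearMap.range T).smithNormalForm b
  have hrank : Module.finrank O V = n := by
    rw [(LinearEquiv.ofInjective T hinj).finrank_eq, Module.finrank_eq_card_basis snf.bN,
      Fintype.card_fin]
  have hbij : Function.Bijective snf.f := by
    rw [Fintype.bijective_iff_injective_and_card]
    refine ⟨snf.f.injective, ?_⟩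
    rw [Fintype.card_fin, ← hrank, Module.finrank_eq_card_chooseBasisIndex]
  let σ : Fin n ≃ Module.Free.ChooseBasisIndex O V := Equiv.ofBijective snf.f hbij
  set a' : Module.Free.ChooseBasisIndex O V → O := snf.a ∘ σ.symm with ha'
  have hfσ : ∀ j, snf.f j = σ j := fun j => rfl
  have hσa : ∀ i, ((snf.bN (σ.symm i) : V)) = a' i • snf.bM i := by
    intro i
    rw [snf.snf (σ.symm i)]
    simp only [ha', Function.comp_apply]
    rw [hfσ, σ.apply_symm_apply]
  let e : V ≃ₗ[O] LinearMap.range T := snf.bM.equiv snf.bN σ.symm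
  let g : V →ₗ[O] V := (LinearMap.range T).subtype ∘ₗ e.toLinearMap
  have hg : ∀ i, g (snf.bM i) = a' i • snf.bM i := by
    intro i
    have : e (snf.bM i) = snf.bN (σ.symm i) := snf.bM.equiv_apply i snf.bN σ.symm
    simp only [g, LinearMap.comp_apply, LinearEquiv.coe_coe, this, Submodule.coe_subtype]
    exact hσa i
  have hdetg : LinearMap.det g = ∏ i, a' i := by
    rw [← LinearMap.det_toMatrix snf.bM]
    have hM : LinearMap.toMatrix snf.bM snf.bM g = Matrix.diagonal a' := by
      ext i j
      rw [LinearMap.toMatrix_apply, hg j, map_smul]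
      simp only [Module.Basis.repr_self, Finsupp.smul_single, smul_eq_mul, mul_one]
      by_cases h : i = j
      · subst h; simp [Matrix.diagonal_apply_eq]
      · rw [Finsupp.single_eq_of_ne h, Matrix.diagonal_apply_ne _ h]
    rw [hM, Matrix.det_diagonal]
  let u : V →ₗ[O] V := e.symm.toLinearMap ∘ₗ T.rangeRestrict
  have hgu : g ∘ₗ u = T := by
    ext x
    simp [g, u]
  have husurj : Function.Surjective u := by
    exact e.symm.surjective.comp T.surjective_rangeRestrict
  have hubij : Function.Bijective u :=
    ⟨OrzechProperty.injective_of_surjective_endomorphism u husurj, husurj⟩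
  have hudet : IsUnit (LinearMap.det u) := by
    have : u = (LinearEquiv.ofBijective u hubij : V →ₗ[O] V) := rfl
    rw [this]
    exact LinearEquiv.isUnit_det' _
  have hdetTg : LinearMap.det T = LinearMap.det g * LinearMap.det u := by
    rw [← hgu, LinearMap.det_comp]
  have hassoc : Associated (∏ i, a' i) (ϖ ^ k) := by
    refine Associated.trans ?_ hdet
    rw [← hdetg]
    exact ⟨hudet.unit, by rw [IsUnit.unit_spec]; exact hdetTg.symm⟩
  have a'_ne : ∀ i, a' i ≠ 0 := by
    intro i hi
    have : (∏ j, a' j) = 0 := Finset.prod_eq_zero (Finset.mem_univ i) hi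
    rw [this] at hassoc
    exact hϖk ((associated_zero_iff_eq_zero _).mp hassoc.symm)
  choose m hm using fun i => IsDiscreteValuationRing.associated_pow_irreducible (a'_ne i) hϖ
  have hsum : (∑ i, m i) = k := by
    have h2 : Associated (ϖ ^ (∑ i, m i)) (ϖ ^ k) := by
      rw [← Finset.prod_pow_eq_pow_sum]
      exact (Associated.prod Finset.univ _ _ fun i _ => hm i).symm.trans hassoc
    exact le_antisymm ((pow_dvd_pow_iff hϖ.ne_zero hϖ.not_isUnit).mp h2.dvd)
      ((pow_dvd_pow_iff hϖ.ne_zero hϖ.not_isUnit).mp h2.symm.dvd)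
  have mem_iff : ∀ x : V, x ∈ LinearMap.range T ↔ ∀ i, a' i ∣ snf.bM.repr x i := by
    intro x
    constructor
    · intro hx i
      have h4 := congrFun (snf.repr_comp_embedding_eq_smul (⟨x, hx⟩ : LinearMap.range T)) (σ.symm i)
      simp only [Function.comp_apply, Pi.smul_apply, smul_eq_mul] at h4
      rw [hfσ, σ.apply_symm_apply] at h4
      exact ⟨_, h4⟩
    · intro h
      choose c hc using h
      have hxy : x = ((∑ j, c (σ j) • snf.bN j : LinearMap.range T) : V) := by
        push_cast
        have : ∀ j, c (σ j) • ((snf.bN j : V)) = (snf.bM.repr x (σ j)) • snf.bM (σ j) := by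
          intro j
          have := hσa (σ j)
          rw [σ.symm_apply_apply] at this
          rw [this, smul_smul, mul_comm (c (σ j)) (a' (σ j)), ← hc (σ j)]
        calc x = ∑ i, snf.bM.repr x i • snf.bM i := (snf.bM.sum_repr x).symm
          _ = ∑ j, snf.bM.repr x (σ j) • snf.bM (σ j) := (Fintype.sum_equiv σ _ _ fun j => rfl).symm
          _ = ∑ j, c (σ j) • ((snf.bN j : V)) := by
              exact Finset.sum_congr rfl fun j _ => (this j).symm
      rw [hxy]
      exact Submodule.coe_mem _
  have hmap : Submodule.map (snf.bM.equivFun : V →ₗ[O] _) (LinearMap.range T) =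
      Submodule.pi Set.univ fun i => Ideal.span {a' i} := by
    ext x
    simp only [Submodule.mem_map, Submodule.mem_pi, Set.mem_univ, forall_true_left,
      Ideal.mem_span_singleton, LinearEquiv.coe_coe, Module.Basis.equivFun_apply]
    constructor
    · rintro ⟨y, hy, rfl⟩ i
      exact (mem_iff y).mp hy i
    · intro h
      refine ⟨∑ i, x i • snf.bM i, (mem_iff _).mpr fun i => ?_, ?_⟩
      · rw [snf.bM.repr_sum_self]
        exact h i
      · ext j
        rw [snf.bM.repr_sum_self]
  let e2 : (V ⧸ LinearMap.range T) ≃ₗ[O] ∀ i, O ⧸ Ideal.span {a' i} :=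
    (Submodule.Quotient.equiv _ _ snf.bM.equivFun hmap).trans (Submodule.quotientPi _)
  rw [Nat.card_congr e2.toEquiv, Nat.card_pi]
  have hcard : ∀ i, Nat.card (O ⧸ Ideal.span {a' i}) = q ^ m i := by
    intro i
    rw [show Ideal.span {a' i} = Ideal.span {ϖ ^ m i} from
      Ideal.span_singleton_eq_span_singleton.mpr (hm i)]
    exact aux_card_quot_pow ϖ hϖ q hq (m i)
  rw [Finset.prod_congr rfl fun i _ => hcard i, Finset.prod_pow_eq_pow_sum, hsum]

end Aux

/-- Let `O` be a discrete valuation ring with uniformizer `ϖ`, residue field of size `q`,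
`V` a free `O`-module of rank `d`, and `T : V → V` an `O`-linear endomorphism which, over
the fraction field, is triangularizable with all eigenvalues `μ` of valuation `v(μ) = c`
(expressed here: the characteristic polynomial of `T` is `∏ (X - μ i)` with each `μ i`
associated to `ϖ^c`).  Then for any integer `r > c`, the cardinality of the kernel of `T`
acting on `V ⊗ O/(ϖ^r)` divides `q^(d·c)`; equivalently `q^(d(r-c))` divides the
cardinality of the cokernel `(V ⊗ O/(ϖ^r)) / ker T`. -/
theorem stmt_3 {O : Type*} [CommRing O] [IsDomain O] [IsDiscreteValuationRing O]
    (ϖ : O) (hϖ : Irreducible ϖ) (q : ℕ)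
    (hq : Nat.card (O ⧸ Ideal.span {ϖ}) = q) (hq0 : 0 < q)
    {V : Type*} [AddCommGroup V] [Module O V] [Module.Free O V] [Module.Finite O V]
    (d c r : ℕ) (hd : Module.finrank O V = d) (hrc : c < r)
    (T : V →ₗ[O] V) (μ : Fin d → O)
    (hchar : LinearMap.charpoly T = ∏ i, (Polynomial.X - Polynomial.C (μ i)))
    (hval : ∀ i, Associated (μ i) (ϖ ^ c))
    (hT : (Ideal.span {ϖ ^ r} • ⊤ : Submodule O V) ≤
      ((Ideal.span {ϖ ^ r} • ⊤ : Submodule O V)).comap T) :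
    Nat.card (LinearMap.ker
        (Submodule.mapQ (Ideal.span {ϖ ^ r} • ⊤) (Ideal.span {ϖ ^ r} • ⊤) T hT)) ∣
      q ^ (d * c) ∧
    q ^ (d * (r - c)) ∣
      Nat.card ((V ⧸ (Ideal.span {ϖ ^ r} • ⊤ : Submodule O V)) ⧸
        LinearMap.ker
          (Submodule.mapQ (Ideal.span {ϖ ^ r} • ⊤) (Ideal.span {ϖ ^ r} • ⊤) T hT)) := by
  classical
  set N : Submodule O V := Ideal.span {ϖ ^ r} • ⊤ with hNdef
  set T' : (V ⧸ N) →ₗ[O] (V ⧸ N) := Submodule.mapQ N N T hT with hT'def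
  -- `N` is the range of scalar multiplication by `ϖ ^ r`
  have hN : N = LinearMap.range ((ϖ ^ r) • (LinearMap.id : V →ₗ[O] V)) := by
    rw [hNdef, Submodule.ideal_span_singleton_smul]
    ext x
    simp only [LinearMap.mem_range, LinearMap.smul_apply, LinearMap.id_coe, id_eq]
    rw [← SetLike.mem_coe, Submodule.coe_pointwise_smul]
    simp [Set.mem_smul_set]
  have hdetS : LinearMap.det ((ϖ ^ r) • (LinearMap.id : V →ₗ[O] V)) = ϖ ^ (d * r) := by
    let b := Module.Free.chooseBasis O V
    rw [← LinearMap.det_toMatrix b, map_smul, LinearMap.toMatrix_id, Matrix.det_smul,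
      Matrix.det_one, mul_one, ← Module.finrank_eq_card_chooseBasisIndex, hd, ← pow_mul,
      mul_comm r d]
  have hcardM : Nat.card (V ⧸ N) = q ^ (d * r) := by
    rw [hN]
    exact aux_card_quot_range ϖ hϖ q hq _ (d * r) (hdetS ▸ Associated.refl _)
  have hdT : LinearMap.det T = ∏ i, μ i := by
    rw [LinearMap.det_eq_sign_charpoly_coeff, Polynomial.coeff_zero_eq_eval_zero, hchar,
      Polynomial.eval_prod, hd]
    simp only [Polynomial.eval_sub, Polynomial.eval_X, Polynomial.eval_C, zero_sub]
    calc (-1:O) ^ d * ∏ x : Fin d, -μ x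
        = (-1:O) ^ d * ∏ x : Fin d, (-1) * μ x := by simp only [neg_one_mul]
      _ = (-1:O) ^ d * ((∏ _x : Fin d, (-1:O)) * ∏ x : Fin d, μ x) := by
          rw [Finset.prod_mul_distrib]
      _ = ∏ i, μ i := by
          rw [Finset.prod_const, Finset.card_univ, Fintype.card_fin, ← mul_assoc, ← mul_pow,
            neg_mul_neg, one_mul, one_pow, one_mul]
  have hdetT : Associated (LinearMap.det T) (ϖ ^ (d * c)) := by
    rw [hdT]
    have h5 : Associated (∏ i, μ i) (∏ _i : Fin d, ϖ ^ c) :=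
      Associated.prod Finset.univ _ _ fun i _ => hval i
    rwa [Finset.prod_const, Finset.card_univ, Fintype.card_fin, ← pow_mul, mul_comm c d] at h5
  have hcardRT : Nat.card (V ⧸ LinearMap.range T) = q ^ (d * c) :=
    aux_card_quot_range ϖ hϖ q hq T (d * c) hdetT
  haveI hfinM : Finite (V ⧸ N) := Nat.finite_of_card_ne_zero (by
    rw [hcardM]; exact (pow_pos hq0 _).ne')
  have hrange : LinearMap.range T' = Submodule.map N.mkQ (LinearMap.range T) := by
    have h6 : T' ∘ₗ N.mkQ = N.mkQ ∘ₗ T := Submodule.mapQ_mkQ (p := N) (q := N) T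
    calc LinearMap.range T' = LinearMap.range (T' ∘ₗ N.mkQ) := by
          rw [LinearMap.range_comp, Submodule.range_mkQ, Submodule.map_top]
      _ = LinearMap.range (N.mkQ ∘ₗ T) := by rw [h6]
      _ = Submodule.map N.mkQ (LinearMap.range T) := by
          rw [LinearMap.range_comp]
  have hidx : ∀ W : Submodule O (V ⧸ N),
      W.toAddSubgroup.index = Nat.card ((V ⧸ N) ⧸ W) := fun W => Submodule.cardQuot_apply W
  have hcount : ∀ W : Submodule O (V ⧸ N),
      Nat.card ((V ⧸ N) ⧸ W) * Nat.card W = Nat.card (V ⧸ N) := by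
    intro W
    have h := AddSubgroup.index_mul_card W.toAddSubgroup
    rw [hidx W] at h
    exact h
  have e3 := T'.quotKerEquivRange
  have hkerim : Nat.card (LinearMap.ker T') = Nat.card ((V ⧸ N) ⧸ LinearMap.range T') := by
    have h7 := hcount (LinearMap.ker T')
    have h8 := hcount (LinearMap.range T')
    have h9 : Nat.card ((V ⧸ N) ⧸ LinearMap.ker T') = Nat.card (LinearMap.range T') :=
      Nat.card_congr e3.toEquiv
    rw [h9] at h7
    have hpos : 0 < Nat.card (LinearMap.range T') := Nat.card_pos
    have h10 : Nat.card (LinearMap.range T') * Nat.card (LinearMap.ker T') =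
        Nat.card (LinearMap.range T') * Nat.card ((V ⧸ N) ⧸ LinearMap.range T') := by
      rw [h7, ← h8, mul_comm]
    exact Nat.eq_of_mul_eq_mul_left hpos h10
  have hcoker : Nat.card ((V ⧸ N) ⧸ LinearMap.range T') =
      Nat.card (V ⧸ (N ⊔ LinearMap.range T)) := by
    rw [hrange]
    exact Nat.card_congr (Submodule.quotientQuotientEquivQuotientSup N (LinearMap.range T)).toEquiv
  have hdvd1 : Nat.card (V ⧸ (N ⊔ LinearMap.range T)) ∣ q ^ (d * c) := by
    have e4 := Submodule.quotientQuotientEquivQuotientSup (LinearMap.range T) N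
    have h10 : Nat.card (V ⧸ (N ⊔ LinearMap.range T)) =
        Nat.card ((V ⧸ LinearMap.range T) ⧸ Submodule.map (LinearMap.range T).mkQ N) := by
      rw [sup_comm]
      exact (Nat.card_congr e4.toEquiv).symm
    rw [h10, ← hcardRT]
    have h11 : (Submodule.map (LinearMap.range T).mkQ N).toAddSubgroup.index =
        Nat.card ((V ⧸ LinearMap.range T) ⧸ Submodule.map (LinearMap.range T).mkQ N) :=
      Submodule.cardQuot_apply _
    rw [← h11]
    exact AddSubgroup.index_dvd_card _
  have part1 : Nat.card (LinearMap.ker T') ∣ q ^ (d * c) := by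
    rw [hkerim, hcoker]
    exact hdvd1
  refine ⟨part1, ?_⟩
  obtain ⟨t, ht⟩ := part1
  have hker_pos : 0 < Nat.card (LinearMap.ker T') := Nat.card_pos
  have hexp : d * r = d * c + d * (r - c) := by
    rw [← Nat.mul_add, Nat.add_sub_cancel' hrc.le]
  have h13 : Nat.card (LinearMap.ker T') * Nat.card ((V ⧸ N) ⧸ LinearMap.ker T') =
      Nat.card (LinearMap.ker T') * (t * q ^ (d * (r - c))) := by
    rw [mul_comm (Nat.card (LinearMap.ker T')), hcount (LinearMap.ker T'), hcardM, hexp,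
      pow_add, ht]
    ring
  have h14 : Nat.card ((V ⧸ N) ⧸ LinearMap.ker T') = t * q ^ (d * (r - c)) :=
    Nat.eq_of_mul_eq_mul_left hker_pos h13
  exact ⟨t, by rw [h14, mul_comm]⟩
end

section
/- Fix a prime p and positive integer r. If k, k' are integers with k, k' ≥ r and k ≡ k' (mod p^{2r}), then the Γ_1(p^r)-modules (L_k/U_{k,r}) ⊗ Z/(p^r) and (L_{k'}/U_{k',r}) ⊗ Z/(p^r) are isomorphic, via the map sending X^{k-i}Y^i ↦ X^{k'-i}Y^i for 0 ≤ i ≤ r. -/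
open MvPolynomial

/-- The (transpose-adjugate) substitution action of the matrix `(a b; c d)` on polynomials
in two variables: `P(X, Y) ↦ P(d X - b Y, -c X + a Y)`. -/
noncomputable def gammaAct {R : Type*} [CommRing R] (a b c d : R) :
    MvPolynomial (Fin 2) R →ₐ[R] MvPolynomial (Fin 2) R :=
  aeval ![C d * X 0 - C b * X 1, - C c * X 0 + C a * X 1]

/-- The submodule of `Z/(p^r)[X,Y]` spanned by all monomials other than the `X^(k-i) Y^i`
with `0 ≤ i ≤ r`; the quotient by it realizes `(L_k / U_{k,r}) ⊗ Z/(p^r)`. -/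
noncomputable def Nsub (R : Type*) [CommRing R] (k r : ℕ) : Submodule R (MvPolynomial (Fin 2) R) :=
  Submodule.span R
    {P | ∃ m : Fin 2 →₀ ℕ, P = monomial m 1 ∧ ¬ (m 1 ≤ r ∧ m 0 + m 1 = k)}

/- ### Auxiliary arithmetic lemmas -/

lemma descF_modeq (n : ℕ) : ∀ (j a b : ℕ), j ≤ a → j ≤ b → a ≡ b [MOD n] →
    a.descFactorial j ≡ b.descFactorial j [MOD n] := by
  intro j
  induction j with
  | zero => intro a b _ _ _; rfl
  | succ j ih =>
    intro a b hja hjb hab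
    rw [Nat.descFactorial_succ, Nat.descFactorial_succ]
    have h1 : a - j ≡ b - j [MOD n] := by
      apply Nat.ModEq.add_right_cancel' j
      rwa [Nat.sub_add_cancel (le_of_lt hja), Nat.sub_add_cancel (le_of_lt hjb)]
    exact h1.mul (ih a b (le_of_lt hja) (le_of_lt hjb) hab)

lemma choose_congr_int {p r j a b : ℕ} (hp : p.Prime) (hj : j ≤ r) (hja : j ≤ a) (hjb : j ≤ b)
    (hab : a ≡ b [MOD p ^ (2 * r)]) :
    ((p : ℤ)) ^ r ∣ (a.choose j : ℤ) - (b.choose j : ℤ) := by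
  have key : ((p : ℤ)) ^ (2 * r) ∣ (Nat.factorial j : ℤ) * ((a.choose j : ℤ) - b.choose j) := by
    have h1 : (a.descFactorial j : ℤ) - b.descFactorial j
        = (Nat.factorial j : ℤ) * ((a.choose j : ℤ) - (b.choose j : ℤ)) := by
      rw [Nat.descFactorial_eq_factorial_mul_choose, Nat.descFactorial_eq_factorial_mul_choose]
      push_cast; ring
    rw [← h1]
    have h2 := ((descF_modeq (p ^ (2*r)) j a b hja hjb hab).symm).dvd
    exact_mod_cast h2
  set v := (Nat.factorial j).factorization p with hv
  have hfne : Nat.factorial j ≠ 0 := Nat.factorial_ne_zero j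
  have hpfact : Fact p.Prime := ⟨hp⟩
  have hvr : v ≤ r := by
    have h3 : v = padicValNat p (Nat.factorial j) := by
      rw [hv, Nat.factorization_def _ hp]
    have h4 := Nat.Prime.emultiplicity_factorial_le_div_pred hp j
    rw [← padicValNat_eq_emultiplicity (Nat.factorial_ne_zero j), ← h3] at h4
    have h5 : v ≤ j / (p - 1) := by exact_mod_cast h4
    calc v ≤ j / (p-1) := h5
      _ ≤ j := Nat.div_le_self _ _
      _ ≤ r := hj
  set u := (Nat.factorial j) / p ^ v with hu
  have hune : ¬ p ∣ u := Nat.not_dvd_ordCompl hp hfne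
  have hfac : (Nat.factorial j : ℤ) = (p : ℤ) ^ v * u := by
    exact_mod_cast (congrArg (Nat.cast : ℕ → ℤ)
      (Nat.ordProj_mul_ordCompl_eq_self (Nat.factorial j) p)).symm
  rw [hfac, mul_assoc] at key
  have hsplit : ((p:ℤ)) ^ (2 * r) = (p:ℤ) ^ v * (p:ℤ) ^ (2*r - v) := by
    rw [← pow_add]; congr 1; omega
  rw [hsplit] at key
  have hpne : ((p:ℤ)) ^ v ≠ 0 := pow_ne_zero _ (by exact_mod_cast hp.ne_zero)
  have key2 : ((p:ℤ)) ^ (2*r - v) ∣ (u : ℤ) * ((a.choose j : ℤ) - b.choose j) :=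
    (mul_dvd_mul_iff_left hpne).mp key
  have hcop : IsCoprime ((p:ℤ) ^ (2*r - v)) (u : ℤ) := by
    rw [show ((p:ℤ) ^ (2*r-v)) = ((p ^ (2*r-v) : ℕ) : ℤ) by push_cast; ring]
    rw [Nat.isCoprime_iff_coprime]
    exact (Nat.Prime.coprime_iff_not_dvd hp |>.mpr hune).pow_left _
  have key3 := hcop.dvd_of_dvd_mul_left key2
  exact dvd_trans (pow_dvd_pow _ (by omega)) key3

lemma choose_congr_zmod {p r j a b : ℕ} (hp : p.Prime) (hj : j ≤ r) (hja : j ≤ a) (hjb : j ≤ b)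
    (hab : a ≡ b [MOD p ^ (2 * r)]) :
    ((a.choose j : ZMod (p ^ r)) = (b.choose j : ZMod (p ^ r))) := by
  have h := choose_congr_int hp hj hja hjb hab
  have h2 : (((a.choose j : ℤ) - (b.choose j : ℤ) : ℤ) : ZMod (p ^ r)) = 0 := by
    rw [ZMod.intCast_zmod_eq_zero_iff_dvd]
    exact_mod_cast h
  push_cast at h2
  exact sub_eq_zero.mp h2

/- ### The basic linear maps between the quotients -/

noncomputable def phiMap (R : Type*) [CommRing R] (r k k' : ℕ) :
    MvPolynomial (Fin 2) R →ₗ[R] MvPolynomial (Fin 2) R :=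
  (MvPolynomial.basisMonomials (Fin 2) R).constr R fun m =>
    if m 1 ≤ r ∧ m 0 + m 1 = k then
      monomial (Finsupp.single 0 (k' - m 1) + Finsupp.single 1 (m 1)) 1 else 0

lemma phiMap_monomial (R : Type*) [CommRing R] (r k k' : ℕ) (m : Fin 2 →₀ ℕ) (c : R) :
    phiMap R r k k' (monomial m c)
      = if m 1 ≤ r ∧ m 0 + m 1 = k then
          monomial (Finsupp.single 0 (k' - m 1) + Finsupp.single 1 (m 1)) c else 0 := by
  have h1 : (monomial m c : MvPolynomial (Fin 2) R) = c • monomial m 1 := by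
    rw [smul_monomial, smul_eq_mul, mul_one]
  rw [h1, map_smul, phiMap]
  have h2 := (MvPolynomial.basisMonomials (Fin 2) R).constr_basis R
    (fun m : Fin 2 →₀ ℕ => if m 1 ≤ r ∧ m 0 + m 1 = k then
      (monomial (Finsupp.single 0 (k' - m 1) + Finsupp.single 1 (m 1)) 1
        : MvPolynomial (Fin 2) R) else 0) m
  rw [coe_basisMonomials] at h2
  rw [h2]
  split_ifs with h
  · rw [smul_monomial, smul_eq_mul, mul_one]
  · rw [smul_zero]

lemma mem_Nsub_monomial (R : Type*) [CommRing R] {r k : ℕ} {m : Fin 2 →₀ ℕ}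
    (h : ¬ (m 1 ≤ r ∧ m 0 + m 1 = k)) (c : R) :
    (monomial m c : MvPolynomial (Fin 2) R) ∈ Nsub R k r := by
  have h1 : (monomial m 1 : MvPolynomial (Fin 2) R) ∈ Nsub R k r :=
    Submodule.subset_span ⟨m, rfl, h⟩
  have h2 : (monomial m c : MvPolynomial (Fin 2) R) = c • monomial m 1 := by
    rw [smul_monomial, smul_eq_mul, mul_one]
  rw [h2]
  exact Submodule.smul_mem _ _ h1

lemma phiMap_ker (R : Type*) [CommRing R] (r k k' : ℕ) :
    Nsub R k r ≤ LinearMap.ker ((Nsub R k' r).mkQ ∘ₗ phiMap R r k k') := by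
  rw [Nsub, Submodule.span_le]
  rintro P ⟨m, rfl, hm⟩
  simp only [SetLike.mem_coe, LinearMap.mem_ker, LinearMap.comp_apply, phiMap_monomial,
    if_neg hm, map_zero]

noncomputable def Fq (R : Type*) [CommRing R] (r k k' : ℕ) :
    (MvPolynomial (Fin 2) R ⧸ Nsub R k r) →ₗ[R] (MvPolynomial (Fin 2) R ⧸ Nsub R k' r) :=
  Submodule.liftQ _ ((Nsub R k' r).mkQ ∘ₗ phiMap R r k k') (phiMap_ker R r k k')

lemma Fq_mk (R : Type*) [CommRing R] (r k k' : ℕ) (P : MvPolynomial (Fin 2) R) :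
    Fq R r k k' (Submodule.Quotient.mk P) = Submodule.Quotient.mk (phiMap R r k k' P) := rfl

lemma Fq_comp (R : Type*) [CommRing R] {r k k' : ℕ} (hk : r ≤ k) (hk' : r ≤ k') :
    (Fq R r k' k) ∘ₗ (Fq R r k k') = LinearMap.id := by
  apply Submodule.linearMap_qext
  apply (MvPolynomial.basisMonomials (Fin 2) R).ext
  intro m
  rw [coe_basisMonomials]
  simp only [LinearMap.comp_apply, Submodule.mkQ_apply, LinearMap.id_apply]
  by_cases h : m 1 ≤ r ∧ m 0 + m 1 = k
  · rw [Fq_mk, phiMap_monomial, if_pos h]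
    set m' : Fin 2 →₀ ℕ := Finsupp.single 0 (k' - m 1) + Finsupp.single 1 (m 1) with hm'
    have hm'1 : m' 1 = m 1 := by simp [hm', Finsupp.single_apply]
    have hm'0 : m' 0 = k' - m 1 := by simp [hm', Finsupp.single_apply]
    rw [Fq_mk, phiMap_monomial, if_pos ⟨by rw [hm'1]; exact h.1, by rw [hm'0, hm'1]; omega⟩]
    congr 1
    rw [hm'1]
    have : Finsupp.single (0 : Fin 2) (k - m 1) + Finsupp.single 1 (m 1) = m := by
      ext x
      fin_cases x
      · simp [Finsupp.single_apply]; omega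
      · simp [Finsupp.single_apply]
    rw [this]
  · rw [Fq_mk, phiMap_monomial, if_neg h, Submodule.Quotient.mk_zero, map_zero]
    exact ((Submodule.Quotient.mk_eq_zero _).mpr (mem_Nsub_monomial R h 1)).symm

lemma pow_mul_pow_eq_monomial (R : Type*) [CommRing R] (a b : ℕ) :
    (X 0 ^ a * X 1 ^ b : MvPolynomial (Fin 2) R)
      = monomial (Finsupp.single 0 a + Finsupp.single 1 b) 1 := by
  rw [X_pow_eq_monomial, X_pow_eq_monomial, monomial_mul, one_mul]

lemma Fq_mk_pow (R : Type*) [CommRing R] {r k k' : ℕ} (hk : r ≤ k) (hk' : r ≤ k')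
    (i : ℕ) (hi : i ≤ r) :
    Fq R r k k' (Submodule.Quotient.mk (X 0 ^ (k - i) * X 1 ^ i))
      = Submodule.Quotient.mk (X 0 ^ (k' - i) * X 1 ^ i) := by
  rw [pow_mul_pow_eq_monomial, pow_mul_pow_eq_monomial, Fq_mk, phiMap_monomial]
  have e1 : ((Finsupp.single (0 : Fin 2) (k - i) + Finsupp.single 1 i : Fin 2 →₀ ℕ)) 1 = i := by
    simp [Finsupp.single_apply]
  have e0 : ((Finsupp.single (0 : Fin 2) (k - i) + Finsupp.single 1 i : Fin 2 →₀ ℕ)) 0 = k - i := by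
    simp [Finsupp.single_apply]
  rw [if_pos ⟨by rw [e1]; exact hi, by rw [e0, e1]; omega⟩, e1]

/- ### Expansion of the twisted monomials -/

lemma expand_poly (R : Type*) [CommRing R] (n i : ℕ) (β : R) :
    ((X 0 - C β * X 1) ^ n * X 1 ^ i : MvPolynomial (Fin 2) R)
      = ∑ j ∈ Finset.range (n + 1),
          ((n.choose j : R) * (-β) ^ j) • (X 0 ^ (n - j) * X 1 ^ (i + j)) := by
  rw [show (X 0 - C β * X 1 : MvPolynomial (Fin 2) R) = C (-β) * X 1 + X 0 by
    rw [map_neg]; ring]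
  rw [add_pow, Finset.sum_mul]
  apply Finset.sum_congr rfl
  intro j hj
  rw [smul_eq_C_mul, mul_pow, ← map_pow, map_mul, map_pow, map_neg]
  rw [show ((n.choose j : MvPolynomial (Fin 2) R)) = C (n.choose j : R) by simp]
  rw [pow_add]
  ring

lemma mk_expand (R : Type*) [CommRing R] {r k : ℕ} (i : ℕ) (hi : i ≤ r) (hk : r ≤ k) (β : R) :
    (Submodule.Quotient.mk ((X 0 - C β * X 1) ^ (k - i) * X 1 ^ i)
        : MvPolynomial (Fin 2) R ⧸ Nsub R k r)
      = ∑ j ∈ Finset.range (r - i + 1),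
          (((k - i).choose j : R) * (-β) ^ j) •
            (Submodule.Quotient.mk (X 0 ^ (k - i - j) * X 1 ^ (i + j))) := by
  rw [← Submodule.mkQ_apply, expand_poly, map_sum]
  rw [← Finset.sum_subset (Finset.range_subset_range.mpr (by omega :
      r - i + 1 ≤ k - i + 1))]
  · exact Finset.sum_congr rfl fun j hj => by rw [map_smul, Submodule.mkQ_apply]
  · intro j hjbig hjsmall
    rw [Finset.mem_range] at hjbig hjsmall
    rw [map_smul, Submodule.mkQ_apply, pow_mul_pow_eq_monomial,
      (Submodule.Quotient.mk_eq_zero _).mpr, smul_zero]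
    apply mem_Nsub_monomial
    intro hcon
    have : i + j ≤ r := by simpa [Finsupp.single_apply] using hcon.1
    omega

lemma gammaAct_one (R : Type*) [CommRing R] (β : R) (n i : ℕ) :
    gammaAct (1 : R) β 0 1 (X 0 ^ n * X 1 ^ i)
      = (X 0 - C β * X 1) ^ n * X 1 ^ i := by
  simp [gammaAct]

/- ### Main theorem -/

/-- Fix a prime `p` and positive integer `r`.  If `k, k' ≥ r` and `k ≡ k' (mod p^(2r))`,
then the `Γ₁(p^r)`-modules `(L_k/U_{k,r}) ⊗ Z/(p^r)` and `(L_{k'}/U_{k',r}) ⊗ Z/(p^r)`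
are isomorphic via `X^(k-i) Y^i ↦ X^(k'-i) Y^i` (0 ≤ i ≤ r): there is a `Z/(p^r)`-linear
equivalence sending basis monomials correspondingly and intertwining the action of every
`γ ∈ Γ₁(p^r)`. -/
theorem stmt_7 (p : ℕ) (hp : p.Prime) (r : ℕ) (hr : 0 < r) (k k' : ℕ)
    (hk : r ≤ k) (hk' : r ≤ k') (hkk' : k ≡ k' [MOD p ^ (2 * r)]) :
    ∃ e : (MvPolynomial (Fin 2) (ZMod (p ^ r)) ⧸ Nsub (ZMod (p ^ r)) k r)
          ≃ₗ[ZMod (p ^ r)]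
          (MvPolynomial (Fin 2) (ZMod (p ^ r)) ⧸ Nsub (ZMod (p ^ r)) k' r),
      (∀ i : ℕ, i ≤ r →
        e (Submodule.Quotient.mk (X 0 ^ (k - i) * X 1 ^ i))
          = Submodule.Quotient.mk (X 0 ^ (k' - i) * X 1 ^ i)) ∧
      (∀ a b c d : ℤ, a * d - b * c = 1 → ((p : ℤ) ^ r ∣ c) →
          a ≡ 1 [ZMOD (p : ℤ) ^ r] → d ≡ 1 [ZMOD (p : ℤ) ^ r] →
        ∀ i : ℕ, i ≤ r →
          e (Submodule.Quotient.mk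
              (gammaAct (a : ZMod (p ^ r)) (b : ZMod (p ^ r)) (c : ZMod (p ^ r))
                (d : ZMod (p ^ r)) (X 0 ^ (k - i) * X 1 ^ i)))
            = Submodule.Quotient.mk
              (gammaAct (a : ZMod (p ^ r)) (b : ZMod (p ^ r)) (c : ZMod (p ^ r))
                (d : ZMod (p ^ r)) (X 0 ^ (k' - i) * X 1 ^ i))) := by
  refine ⟨LinearEquiv.ofLinear (Fq (ZMod (p ^ r)) r k k') (Fq (ZMod (p ^ r)) r k' k)
      (Fq_comp (ZMod (p ^ r)) hk' hk) (Fq_comp (ZMod (p ^ r)) hk hk'), ?_, ?_⟩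
  · intro i hi
    rw [LinearEquiv.ofLinear_apply]
    exact Fq_mk_pow (ZMod (p ^ r)) hk hk' i hi
  · intro a b c d hdet hc ha hd i hi
    have hc0 : ((c : ZMod (p ^ r))) = 0 := by
      rw [ZMod.intCast_zmod_eq_zero_iff_dvd]
      exact_mod_cast hc
    have ha1 : ((a : ZMod (p ^ r))) = 1 := by
      have h1 : ((a : ZMod (p ^ r))) = ((1 : ℤ) : ZMod (p ^ r)) := by
        rw [ZMod.intCast_eq_intCast_iff]
        exact_mod_cast ha
      rw [h1, Int.cast_one]
    have hd1 : ((d : ZMod (p ^ r))) = 1 := by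
      have h1 : ((d : ZMod (p ^ r))) = ((1 : ℤ) : ZMod (p ^ r)) := by
        rw [ZMod.intCast_eq_intCast_iff]
        exact_mod_cast hd
      rw [h1, Int.cast_one]
    rw [ha1, hc0, hd1, gammaAct_one, gammaAct_one, LinearEquiv.ofLinear_apply]
    rw [mk_expand (ZMod (p ^ r)) i hi hk, mk_expand (ZMod (p ^ r)) i hi hk', map_sum]
    apply Finset.sum_congr rfl
    intro j hj
    rw [Finset.mem_range] at hj
    rw [map_smul, Nat.sub_sub, Nat.sub_sub, Fq_mk_pow (ZMod (p ^ r)) hk hk' (i + j) (by omega)]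
    have hsub : k - i ≡ k' - i [MOD p ^ (2 * r)] := by
      apply Nat.ModEq.add_right_cancel' i
      rwa [Nat.sub_add_cancel (le_trans hi hk), Nat.sub_add_cancel (le_trans hi hk')]
    have hchoose : (((k - i).choose j : ZMod (p ^ r))) = ((k' - i).choose j : ZMod (p ^ r)) :=
      choose_congr_zmod hp (by omega) (by omega) (by omega) hsub
    rw [hchoose]
end
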